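/- The expected value of the Colless index of a binary phylogenetic tree with n leaves chosen under the Yule model is E_Y(C_n) = n · ∑_{j=2}^{⌊n/2⌋} 1/j + δ_odd(n), where δ_odd(n) = 1 if n is odd and 0 otherwise. -/

import Mathlib

/-- Binary rooted trees with ℕ-labeled leaves. -/
inductive PTree : Type
  | leaf : ℕ → PTree
  | node : PTree → PTree → PTree

namespace PTree

/-- The set of leaf labels of a tree. -/
def leafSet : PTree → Finset ℕ
  | leaf x => {x}
  | node l r => leafSet l ∪ leafSet r

/-- A tree is a phylogenetic tree if at every internal node the leaf label sets of the
two subtrees are disjoint (so leaves are bijectively labeled). -/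
def isPhylo : PTree → Prop
  | leaf _ => True
  | node l r => isPhylo l ∧ isPhylo r ∧ Disjoint (leafSet l) (leafSet r)

/-- Canonical ordered representative of an isomorphism class of (unordered)
phylogenetic trees: at each internal node, the subtree containing the smallest
label comes first. -/
def canonical : PTree → Prop
  | leaf _ => True
  | node l r => canonical l ∧ canonical r ∧ (leafSet l).min < (leafSet r).min

/-- `t` represents an isomorphism class of phylogenetic trees on the taxon set `S`. -/
def isTreeOn (S : Finset ℕ) (t : PTree) : Prop :=
  isPhylo t ∧ canonical t ∧ leafSet t = S

/-- The number of leaves of a tree. -/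
def numLeaves : PTree → ℕ
  | leaf _ => 1
  | node l r => numLeaves l + numLeaves r

/-- The Colless index: sum over internal nodes of |κ(left child) − κ(right child)|. -/
def colless : PTree → ℕ
  | leaf _ => 0
  | node l r => colless l + colless r + ((numLeaves l : ℤ) - (numLeaves r : ℤ)).natAbs

/-- Product over internal nodes `v` of `1/(κ(v) − 1)`. -/
def yuleProd : PTree → ℚ
  | leaf _ => 1
  | node l r => (1 / ((numLeaves l + numLeaves r : ℕ) - 1 : ℚ)) * yuleProd l * yuleProd r

/-- The probability of a phylogenetic tree with `n` leaves under the Yule model: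
`2^(n-1)/n! · ∏_{v internal} 1/(κ(v)−1)`. -/
def yule (t : PTree) : ℚ :=
  2 ^ (numLeaves t - 1) / (Nat.factorial (numLeaves t) : ℚ) * yuleProd t

/-- The depth of the leaf labeled `x` in the tree (number of arcs from the root). -/
def depthOf (x : ℕ) : PTree → ℕ
  | leaf _ => 0
  | node l r => if x ∈ leafSet l then depthOf x l + 1 else depthOf x r + 1

/-- The Sackin index: sum of the depths of the leaves. -/
def sackin (t : PTree) : ℕ := ∑ x ∈ leafSet t, depthOf x t

/-- Sum over internal nodes `v` of the number of descendant leaves `κ(v)`. -/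
def kappaSum : PTree → ℕ
  | leaf _ => 0
  | node l r => kappaSum l + kappaSum r + (numLeaves l + numLeaves r)

/-- The number of (isomorphism classes of) phylogenetic trees on `{1,…,n}`
in which leaf `1` has depth `k`. -/
noncomputable def ckn (n k : ℕ) : ℕ :=
  Nat.card {t : PTree // isTreeOn (Finset.Icc 1 n) t ∧ depthOf 1 t = k}

/-! ## Auxiliary development -/

deriving instance DecidableEq for PTree


lemma leafSet_nonempty (t : PTree) : t.leafSet.Nonempty := by
  induction t with
  | leaf x => exact ⟨x, by simp [leafSet]⟩
  | node l r ihl ihr => exact ihl.mono (by simp [leafSet, Finset.subset_union_left])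

lemma numLeaves_pos (t : PTree) : 1 ≤ t.numLeaves := by
  induction t with
  | leaf x => simp [numLeaves]
  | node l r ihl ihr => simp [numLeaves]; omega

lemma card_leafSet {t : PTree} (h : isPhylo t) : t.leafSet.card = t.numLeaves := by
  induction t with
  | leaf x => simp [leafSet, numLeaves]
  | node l r ihl ihr =>
    obtain ⟨hl, hr, hd⟩ := h
    simp [leafSet, numLeaves, Finset.card_union_of_disjoint hd, ihl hl, ihr hr]

def splits (S : Finset ℕ) : Finset (Finset ℕ) :=
  S.powerset.filter fun A => A.min < (S \ A).min ∧ (S \ A).Nonempty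

lemma splits_mem {S A : Finset ℕ} (h : A ∈ splits S) :
    A ⊆ S ∧ A.Nonempty ∧ (S \ A).Nonempty ∧ A.min < (S \ A).min := by
  simp only [splits, Finset.mem_filter, Finset.mem_powerset] at h
  obtain ⟨hsub, hlt, hne⟩ := h
  refine ⟨hsub, ?_, hne, hlt⟩
  rw [Finset.nonempty_iff_ne_empty]
  rintro rfl
  simp at hlt

lemma mem_splits {S A : Finset ℕ} (hsub : A ⊆ S) (hlt : A.min < (S \ A).min)
    (hne : (S \ A).Nonempty) : A ∈ splits S := by
  simp only [splits, Finset.mem_filter, Finset.mem_powerset]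
  exact ⟨hsub, hlt, hne⟩

lemma splits_card_lt {S A : Finset ℕ} (h : A ∈ splits S) :
    A.card < S.card ∧ (S \ A).card < S.card := by
  obtain ⟨hsub, hAne, hne, _⟩ := splits_mem h
  have h1 : A.card ≤ S.card := Finset.card_le_card hsub
  have h2 : (S \ A).card = S.card - A.card := Finset.card_sdiff_of_subset hsub
  have h3 : 1 ≤ A.card := Finset.card_pos.2 hAne
  have h4 : A ⊂ S := by
    refine (Finset.ssubset_iff_of_subset hsub).2 ?_
    obtain ⟨x, hx⟩ := hne
    exact ⟨x, (Finset.mem_sdiff.1 hx).1, (Finset.mem_sdiff.1 hx).2⟩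
  have h5 := Finset.card_lt_card h4
  omega

def treesOn (S : Finset ℕ) : Finset PTree :=
  if _ : S.card ≤ 1 then S.image PTree.leaf
  else ((splits S).attach).biUnion
    (fun A => ((treesOn A.1) ×ˢ (treesOn (S \ A.1))).image (fun p => PTree.node p.1 p.2))
termination_by S.card
decreasing_by
  · exact (splits_card_lt A.2).1
  · exact (splits_card_lt A.2).2

lemma treesOn_small {S : Finset ℕ} (h : S.card ≤ 1) : treesOn S = S.image PTree.leaf := by
  rw [treesOn, dif_pos h]

lemma treesOn_big {S : Finset ℕ} (h : 2 ≤ S.card) : treesOn S = ((splits S).attach).biUnion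
    (fun A => ((treesOn A.1) ×ˢ (treesOn (S \ A.1))).image (fun p => PTree.node p.1 p.2)) := by
  rw [treesOn, dif_neg (by omega)]

lemma numLeaves_eq_one {t : PTree} (h : t.numLeaves = 1) : ∃ x, t = leaf x := by
  cases t with
  | leaf x => exact ⟨x, rfl⟩
  | node l r =>
    have h1 := numLeaves_pos l
    have h2 := numLeaves_pos r
    simp [numLeaves] at h
    omega

lemma mem_treesOn : ∀ (S : Finset ℕ) (t : PTree), t ∈ treesOn S ↔ isTreeOn S t := by
  suffices H : ∀ n (S : Finset ℕ) (t : PTree), S.card = n → (t ∈ treesOn S ↔ isTreeOn S t) by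
    intro S t; exact H S.card S t rfl
  intro n
  induction n using Nat.strong_induction_on with
  | _ n ih =>
    intro S t hc
    by_cases hn1 : S.card ≤ 1
    · rw [treesOn_small hn1, Finset.mem_image]
      constructor
      · rintro ⟨x, hx, rfl⟩
        have hS : S = {x} := by
          have : 1 ≤ S.card := Finset.card_pos.2 ⟨x, hx⟩
          have : S.card = 1 := by omega
          obtain ⟨y, hy⟩ := Finset.card_eq_one.1 this
          subst hy
          simp at hx; subst hx; rfl
        exact ⟨trivial, trivial, by simp [leafSet, hS]⟩
      · rintro ⟨hph, hcan, hls⟩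
        have h1 : S.card = 1 := by
          have := card_leafSet hph
          have := numLeaves_pos t
          have h0 := leafSet_nonempty t
          rw [hls] at h0
          have : 1 ≤ S.card := Finset.card_pos.2 h0
          omega
        have h2 : t.numLeaves = 1 := by rw [← card_leafSet hph, hls, h1]
        obtain ⟨x, rfl⟩ := numLeaves_eq_one h2
        refine ⟨x, ?_, rfl⟩
        have : leafSet (leaf x) = S := hls
        simp [leafSet] at this
        rw [← this]; simp
    · push_neg at hn1
      rw [treesOn_big hn1]
      simp only [Finset.mem_biUnion, Finset.mem_attach, Finset.mem_image, Finset.mem_product,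
        true_and, Subtype.exists]
      constructor
      · rintro ⟨A, hA, ⟨l, r⟩, ⟨hl, hr⟩, rfl⟩
        obtain ⟨hsub, hAne, hcne, hlt⟩ := splits_mem hA
        have hcards := splits_card_lt hA
        have hl' : isTreeOn A l := (ih A.card (by omega) A l rfl).1 hl
        have hr' : isTreeOn (S \ A) r := (ih (S \ A).card (by omega) (S \ A) r rfl).1 hr
        obtain ⟨phl, cl, lsl⟩ := hl'
        obtain ⟨phr, cr, lsr⟩ := hr'
        refine ⟨⟨phl, phr, ?_⟩, ⟨cl, cr, ?_⟩, ?_⟩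
        · rw [lsl, lsr]; exact Finset.disjoint_sdiff
        · rw [lsl, lsr]; exact hlt
        · simp only [leafSet, lsl, lsr]
          exact Finset.union_sdiff_of_subset hsub
      · rintro ⟨hph, hcan, hls⟩
        cases t with
        | leaf x =>
          exfalso
          have : S.card = 1 := by rw [← hls]; simp [leafSet]
          omega
        | node l r =>
          obtain ⟨phl, phr, hdisj⟩ := hph
          obtain ⟨cl, cr, hmin⟩ := hcan
          have hls' : leafSet l ∪ leafSet r = S := hls
          have hsub : leafSet l ⊆ S := by rw [← hls']; exact Finset.subset_union_left
          have hrs : leafSet r = S \ leafSet l := by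
            ext x
            simp only [Finset.mem_sdiff]
            constructor
            · intro hx
              exact ⟨by rw [← hls']; exact Finset.mem_union_right _ hx,
                fun hxl => (Finset.disjoint_left.1 hdisj) hxl hx⟩
            · rintro ⟨hxS, hxl⟩
              rw [← hls'] at hxS
              rcases Finset.mem_union.1 hxS with h | h
              · exact absurd h hxl
              · exact h
          have hA : leafSet l ∈ splits S := by
            refine mem_splits hsub ?_ ?_
            · rw [← hrs]; exact hmin
            · rw [← hrs]; exact leafSet_nonempty r
          have hcards := splits_card_lt hA
          refine ⟨leafSet l, hA, ⟨l, r⟩, ⟨?_, ?_⟩, rfl⟩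
          · exact (ih (leafSet l).card (by omega) _ l rfl).2 ⟨phl, cl, rfl⟩
          · exact (ih (S \ leafSet l).card (by omega) _ r rfl).2 ⟨phr, cr, hrs⟩

lemma numLeaves_of_mem {S : Finset ℕ} {t : PTree} (h : t ∈ treesOn S) :
    t.numLeaves = S.card := by
  obtain ⟨hph, _, hls⟩ := (mem_treesOn S t).1 h
  rw [← card_leafSet hph, hls]

lemma min_lt_iff {S A : Finset ℕ} (hsub : A ⊆ S) (hS : S.Nonempty) (hA : A.Nonempty)
    (hc : (S \ A).Nonempty) :
    A.min < (S \ A).min ↔ S.min' hS ∈ A := by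
  rw [← Finset.coe_min' hA, ← Finset.coe_min' hc, WithTop.coe_lt_coe]
  set m := S.min' hS with hm
  constructor
  · intro h
    by_contra hmem
    have h1 : m ∈ S \ A := Finset.mem_sdiff.2 ⟨S.min'_mem hS, hmem⟩
    have h2 : (S \ A).min' hc ≤ m := Finset.min'_le _ _ h1
    have h3 : m ≤ A.min' hA := S.min'_le _ (hsub (A.min'_mem hA))
    omega
  · intro hmem
    have h1 : A.min' hA ≤ m := Finset.min'_le _ _ hmem
    have h2 : m ≤ (S \ A).min' hc := S.min'_le _ (Finset.mem_sdiff.1 ((S \ A).min'_mem hc)).1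
    have h3 : (S \ A).min' hc ≠ m := by
      intro h
      have := (Finset.mem_sdiff.1 ((S \ A).min'_mem hc)).2
      rw [h] at this
      exact this hmem
    omega

lemma card_splits {S : Finset ℕ} (hS : 2 ≤ S.card) {a : ℕ} (h1 : 1 ≤ a)
    (h2 : a ≤ S.card - 1) :
    ((splits S).filter fun A => A.card = a).card = (S.card - 1).choose (a - 1) := by
  have hSne : S.Nonempty := Finset.card_pos.1 (by omega)
  set m := S.min' hSne with hm
  have hmS : m ∈ S := S.min'_mem hSne
  have hcard_erase : (S.erase m).card = S.card - 1 := Finset.card_erase_of_mem hmS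
  rw [← hcard_erase, ← Finset.card_powersetCard]
  refine Finset.card_bij' (fun A _ => A.erase m) (fun B _ => insert m B) ?hi ?hj ?li ?ri
  case hi =>
    intro A hA
    rw [Finset.mem_filter] at hA
    obtain ⟨hA, hcA⟩ := hA
    obtain ⟨hsub, hAne, hcne, hlt⟩ := splits_mem hA
    have hmA : m ∈ A := (min_lt_iff hsub hSne hAne hcne).1 hlt
    rw [Finset.mem_powersetCard]
    exact ⟨Finset.erase_subset_erase _ hsub, by rw [Finset.card_erase_of_mem hmA, hcA]⟩
  case hj =>
    intro B hB
    rw [Finset.mem_powersetCard] at hB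
    obtain ⟨hBsub, hBc⟩ := hB
    have hmB : m ∉ B := fun h => (Finset.notMem_erase m S) (hBsub h)
    have hsub : insert m B ⊆ S := Finset.insert_subset hmS (hBsub.trans (Finset.erase_subset _ _))
    have hcardi : (insert m B).card = a := by
      rw [Finset.card_insert_of_notMem hmB, hBc]; omega
    have hcne : (S \ insert m B).Nonempty := by
      rw [← Finset.card_pos, Finset.card_sdiff_of_subset hsub, hcardi]
      omega
    rw [Finset.mem_filter]
    refine ⟨mem_splits hsub ?_ hcne, hcardi⟩
    exact (min_lt_iff hsub hSne ⟨m, Finset.mem_insert_self m B⟩ hcne).2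
      (Finset.mem_insert_self m B)
  case li =>
    intro A hA
    rw [Finset.mem_filter] at hA
    obtain ⟨hsub, hAne, hcne, hlt⟩ := splits_mem hA.1
    exact Finset.insert_erase ((min_lt_iff hsub hSne hAne hcne).1 hlt)
  case ri =>
    intro B hB
    rw [Finset.mem_powersetCard] at hB
    exact Finset.erase_insert (fun h => (Finset.notMem_erase m S) (hB.1 h))

lemma sum_splits_card {S : Finset ℕ} (hS : 2 ≤ S.card) (F : Finset ℕ → ℚ) (G : ℕ → ℚ)
    (hFG : ∀ A ∈ splits S, F A = G A.card) :
    ∑ A ∈ splits S, F A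
      = ∑ a ∈ Finset.Icc 1 (S.card - 1), ((S.card - 1).choose (a - 1) : ℚ) * G a := by
  have hmaps : ∀ A ∈ splits S, A.card ∈ Finset.Icc 1 (S.card - 1) := by
    intro A hA
    obtain ⟨hsub, hAne, hcne, _⟩ := splits_mem hA
    have := (splits_card_lt hA).1
    have := Finset.card_pos.2 hAne
    rw [Finset.mem_Icc]
    omega
  rw [← Finset.sum_fiberwise_of_maps_to hmaps F]
  apply Finset.sum_congr rfl
  intro a ha
  rw [Finset.mem_Icc] at ha
  have : ∀ A ∈ (splits S).filter (fun A => A.card = a), F A = G a := by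
    intro A hA
    rw [Finset.mem_filter] at hA
    rw [hFG A hA.1, hA.2]
  rw [Finset.sum_congr rfl this, Finset.sum_const, card_splits hS ha.1 ha.2, nsmul_eq_mul]

/-- The Yule coefficient for joining subtrees with `a` and `b` leaves. -/
def KK (a b : ℕ) : ℚ :=
  2 * a.factorial * b.factorial / (((a + b).factorial : ℚ) * ((a : ℚ) + (b : ℚ) - 1))

lemma yule_node (l r : PTree) :
    yule (node l r) = KK l.numLeaves r.numLeaves * yule l * yule r := by
  have ha := numLeaves_pos l
  have hb := numLeaves_pos r
  set a := l.numLeaves with hA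
  set b := r.numLeaves with hB
  have hnum : (node l r).numLeaves = a + b := rfl
  rw [yule, yule, yule, yuleProd, hnum, KK, ← hA, ← hB]
  have hexp : a + b - 1 = (a - 1) + (b - 1) + 1 := by omega
  rw [hexp, pow_add, pow_add, pow_one]
  have h2 : ((a + b : ℕ) : ℚ) - 1 = (a : ℚ) + (b : ℚ) - 1 := by push_cast; ring
  rw [h2]
  have hne1 : ((a + b).factorial : ℚ) ≠ 0 := Nat.cast_ne_zero.2 (Nat.factorial_ne_zero _)
  have hne2 : (a.factorial : ℚ) ≠ 0 := Nat.cast_ne_zero.2 (Nat.factorial_ne_zero _)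
  have hne3 : (b.factorial : ℚ) ≠ 0 := Nat.cast_ne_zero.2 (Nat.factorial_ne_zero _)
  have hne4 : (a : ℚ) + (b : ℚ) - 1 ≠ 0 := by
    have : (1:ℚ) ≤ (a : ℚ) := by exact_mod_cast ha
    have : (1:ℚ) ≤ (b : ℚ) := by exact_mod_cast hb
    nlinarith
  field_simp

lemma sum_treesOn {S : Finset ℕ} (h : 2 ≤ S.card) (f : PTree → ℚ) :
    ∑ t ∈ treesOn S, f t =
      ∑ A ∈ splits S, ∑ l ∈ treesOn A, ∑ r ∈ treesOn (S \ A), f (node l r) := by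
  rw [treesOn_big h]
  rw [Finset.sum_biUnion]
  · rw [← Finset.sum_attach (splits S)
      (fun A => ∑ l ∈ treesOn A, ∑ r ∈ treesOn (S \ A), f (node l r))]
    apply Finset.sum_congr rfl
    intro A _
    rw [Finset.sum_image]
    · rw [Finset.sum_product]
    · rintro ⟨l₁, r₁⟩ _ ⟨l₂, r₂⟩ _ heq
      simpa using heq
  · rintro ⟨A, hA⟩ _ ⟨B, hB⟩ _ hne
    apply Finset.disjoint_left.2
    rintro t ht htB
    rw [Finset.mem_image] at ht htB
    obtain ⟨⟨l₁, r₁⟩, hp₁, heq₁⟩ := ht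
    obtain ⟨⟨l₂, r₂⟩, hp₂, heq₂⟩ := htB
    rw [← heq₂, node.injEq] at heq₁
    rw [Finset.mem_product] at hp₁ hp₂
    have h1 : leafSet l₁ = A := ((mem_treesOn _ _).1 hp₁.1).2.2
    have h2 : leafSet l₂ = B := ((mem_treesOn _ _).1 hp₂.1).2.2
    have h3 : A = B := by rw [← h1, ← h2]; exact congrArg leafSet heq₁.1
    exact hne (Subtype.ext h3)
/-- Closed form for the expected Colless index, with value 0 for `n ≤ 1`. -/
def Ey (n : ℕ) : ℚ :=
  if n ≤ 1 then 0
  else n * (∑ j ∈ Finset.Icc 2 (n / 2), (1 : ℚ) / j) + (if Odd n then 1 else 0)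

def dd (n a : ℕ) : ℕ := ((2 * a : ℤ) - n).natAbs

def tau (n : ℕ) : ℕ := ∑ a ∈ Finset.Icc 1 (n - 1), dd n a

def sig (n : ℕ) : ℕ := ∑ a ∈ Finset.range n, dd n a

lemma sig_step (n : ℕ) : sig (n + 2) = sig n + 2 * n + 2 := by
  unfold sig
  rw [Finset.sum_range_succ', Finset.sum_range_succ]
  have h1 : ∀ i, dd (n + 2) (i + 1) = dd n i := by
    intro i; unfold dd; omega
  have h2 : dd (n + 2) 0 = n + 2 := by unfold dd; omega
  simp only [h1, h2]
  have h3 : dd n n = n := by unfold dd; omega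
  rw [h3]; ring

lemma sig_even (k : ℕ) : sig (2 * k) = 2 * (k * k) := by
  induction k with
  | zero => simp [sig]
  | succ k ih =>
    rw [show 2 * (k + 1) = 2 * k + 2 by ring, sig_step, ih]
    ring

lemma sig_odd (k : ℕ) : sig (2 * k + 1) = 2 * (k * k) + 2 * k + 1 := by
  induction k with
  | zero => simp [sig, dd, Finset.sum_range_succ]
  | succ k ih =>
    rw [show 2 * (k + 1) + 1 = (2 * k + 1) + 2 by ring, sig_step, ih]
    ring

lemma tausig (n : ℕ) (h : 1 ≤ n) : sig n = tau n + n := by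
  obtain ⟨m, rfl⟩ : ∃ m, n = m + 1 := ⟨n - 1, by omega⟩
  unfold sig tau
  rw [Finset.sum_range_succ']
  have h2 : dd (m + 1) 0 = m + 1 := by unfold dd; omega
  rw [h2]
  congr 1
  have h3 : Finset.Icc 1 (m + 1 - 1) = Finset.Ico 1 (m + 1) := by
    rw [Finset.Ico_add_one_right_eq_Icc]; norm_num
  rw [h3, Finset.sum_Ico_eq_sum_range]
  have h4 : m + 1 - 1 = m := by norm_num
  rw [h4]
  apply Finset.sum_congr rfl
  intro i _
  congr 1
  omega

lemma tau_step (n : ℕ) (h : 1 ≤ n) : tau (n + 1) = tau n + 2 * (n / 2) := by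
  have t1 := tausig n h
  have t2 := tausig (n + 1) (by omega)
  rcases Nat.even_or_odd n with ⟨k, rfl⟩ | ⟨k, rfl⟩
  · have e1 : sig (k + k) = 2 * (k * k) := by
      have := sig_even k; rwa [show 2 * k = k + k by ring] at this
    have e2 : sig (k + k + 1) = 2 * (k * k) + 2 * k + 1 := by
      have := sig_odd k; rwa [show 2 * k + 1 = k + k + 1 by ring] at this
    generalize k * k = K at e1 e2
    omega
  · have e1 : sig (2 * k + 1) = 2 * (k * k) + 2 * k + 1 := sig_odd k
    have e2 : sig (2 * k + 1 + 1) = 2 * ((k + 1) * (k + 1)) := by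
      have := sig_even (k + 1); rwa [show 2 * (k + 1) = 2 * k + 1 + 1 by ring] at this
    have e3 : (k + 1) * (k + 1) = k * k + 2 * k + 1 := by ring
    rw [e3] at e2
    generalize k * k = K at e1 e2
    omega

lemma tau_two : tau 2 = 0 := by
  have := tausig 2 (by omega)
  have h1 : sig 2 = 2 := by have := sig_even 1; simpa using this
  omega

lemma Ey_step (n : ℕ) (hn : 2 ≤ n) :
    (n : ℚ) * Ey (n + 1) = ((n : ℚ) + 1) * Ey n + 2 * ((n / 2 : ℕ) : ℚ) := by
  rw [Ey, Ey, if_neg (show ¬(n + 1 ≤ 1) by omega), if_neg (show ¬(n ≤ 1) by omega)]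
  rcases Nat.even_or_odd n with ⟨m, rfl⟩ | ⟨m, rfl⟩
  · have h1 : (m + m) / 2 = m := by omega
    have h2 : (m + m + 1) / 2 = m := by omega
    have h3 : ¬ Odd (m + m) := by simp [Nat.odd_iff]; omega
    have h4 : Odd (m + m + 1) := ⟨m, by omega⟩
    rw [h1, h2, if_neg h3, if_pos h4]
    push_cast
    ring
  · have hm : 1 ≤ m := by omega
    have h1 : (2 * m + 1) / 2 = m := by omega
    have h2 : (2 * m + 1 + 1) / 2 = m + 1 := by omega
    have h3 : Odd (2 * m + 1) := ⟨m, by omega⟩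
    have h4 : ¬ Odd (2 * m + 1 + 1) := by simp [Nat.odd_iff]; omega
    rw [h1, h2, if_pos h3, if_neg h4]
    rw [Finset.sum_Icc_succ_top (by omega : 2 ≤ m + 1)]
    have hm1 : ((m : ℚ) + 1) ≠ 0 := by positivity
    push_cast
    field_simp
    ring

lemma master (n : ℕ) (hn : 2 ≤ n) :
    ((n : ℚ) - 1) * Ey n = 2 * (∑ a ∈ Finset.Icc 1 (n - 1), Ey a) + (tau n : ℚ) := by
  induction n, hn using Nat.le_induction with
  | base =>
    have h1 : Ey 2 = 0 := by norm_num [Ey]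
    have h2 : Ey 1 = 0 := by norm_num [Ey]
    have h3 : tau 2 = 0 := tau_two
    norm_num [h1, h2, h3]
  | succ n hn ih =>
    have hstep := Ey_step n hn
    have htau : tau (n + 1) = tau n + 2 * (n / 2) := tau_step n (by omega)
    have hsum : ∑ a ∈ Finset.Icc 1 (n + 1 - 1), Ey a
        = (∑ a ∈ Finset.Icc 1 (n - 1), Ey a) + Ey n := by
      have h5 : n - 1 + 1 = n := by omega
      rw [show n + 1 - 1 = (n - 1) + 1 by omega,
        Finset.sum_Icc_succ_top (by omega : 1 ≤ n - 1 + 1), h5]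
    rw [hsum, htau]
    push_cast
    linear_combination ih + hstep

lemma coeff_eq (n a : ℕ) (h1 : 1 ≤ a) (h2 : a ≤ n - 1) (hn : 2 ≤ n) :
    (((n - 1).choose (a - 1) : ℕ) : ℚ) * KK a (n - a)
      = 2 * (a : ℚ) / ((n : ℚ) * ((n : ℚ) - 1)) := by
  have hfact : (n - 1).choose (a - 1) * (a - 1).factorial * (n - a).factorial
      = (n - 1).factorial := by
    have h := Nat.choose_mul_factorial_mul_factorial (show a - 1 ≤ n - 1 by omega)
    rwa [show (n - 1) - (a - 1) = n - a by omega] at h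
  have hfa : a.factorial = a * (a - 1).factorial := (Nat.mul_factorial_pred (by omega)).symm
  have hfn : n.factorial = n * (n - 1).factorial := (Nat.mul_factorial_pred (by omega)).symm
  rw [KK, show a + (n - a) = n by omega]
  rw [Nat.cast_sub (by omega : a ≤ n)]
  rw [show (a : ℚ) + ((n : ℚ) - (a : ℚ)) - 1 = (n : ℚ) - 1 by ring]
  have hQ : (((n - 1).choose (a - 1) : ℕ) : ℚ) * ((a - 1).factorial : ℚ)
      * ((n - a).factorial : ℚ) = ((n - 1).factorial : ℚ) := by exact_mod_cast hfact
  have hfa' : (a.factorial : ℚ) = (a : ℚ) * ((a - 1).factorial : ℚ) := by exact_mod_cast hfa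
  have hfn' : (n.factorial : ℚ) = (n : ℚ) * ((n - 1).factorial : ℚ) := by exact_mod_cast hfn
  rw [hfa', hfn']
  have hz1 : ((n - 1).factorial : ℚ) ≠ 0 := Nat.cast_ne_zero.2 (Nat.factorial_ne_zero _)
  have hz2 : ((a - 1).factorial : ℚ) ≠ 0 := Nat.cast_ne_zero.2 (Nat.factorial_ne_zero _)
  have hz3 : ((n - a).factorial : ℚ) ≠ 0 := Nat.cast_ne_zero.2 (Nat.factorial_ne_zero _)
  have hz4 : (n : ℚ) ≠ 0 := Nat.cast_ne_zero.2 (by omega)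
  have hz5 : (n : ℚ) - 1 ≠ 0 := sub_ne_zero.2 (by exact_mod_cast (by omega : n ≠ 1))
  field_simp
  linear_combination hQ

lemma sum_two_mul (m : ℕ) : ∑ a ∈ Finset.Icc 1 m, 2 * a = m * (m + 1) := by
  induction m with
  | zero => simp
  | succ m ih =>
    rw [Finset.sum_Icc_succ_top (by omega : 1 ≤ m + 1), ih]
    ring

lemma sum_coeff_one (n : ℕ) (hn : 2 ≤ n) :
    ∑ a ∈ Finset.Icc 1 (n - 1), (((n - 1).choose (a - 1) : ℕ) : ℚ) * KK a (n - a) = 1 := by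
  have hz4 : (n : ℚ) ≠ 0 := Nat.cast_ne_zero.2 (by omega)
  have hz5 : (n : ℚ) - 1 ≠ 0 := sub_ne_zero.2 (by exact_mod_cast (by omega : n ≠ 1))
  have hpt : ∀ a ∈ Finset.Icc 1 (n - 1),
      (((n - 1).choose (a - 1) : ℕ) : ℚ) * KK a (n - a)
        = 2 * (a : ℚ) * ((n : ℚ) * ((n : ℚ) - 1))⁻¹ := by
    intro a ha
    rw [Finset.mem_Icc] at ha
    rw [coeff_eq n a ha.1 ha.2 hn, div_eq_mul_inv]
  rw [Finset.sum_congr rfl hpt, ← Finset.sum_mul]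
  have hnum : ∑ a ∈ Finset.Icc 1 (n - 1), 2 * (a : ℚ) = ((n : ℚ) - 1) * n := by
    have h := sum_two_mul (n - 1)
    have h2 : ((∑ a ∈ Finset.Icc 1 (n - 1), 2 * a : ℕ) : ℚ)
        = ((n - 1) * (n - 1 + 1) : ℕ) := by exact_mod_cast h
    push_cast at h2
    rw [Nat.cast_sub (by omega : 1 ≤ n)] at h2
    · push_cast at h2 ⊢
      rw [h2]
      have : (n : ℚ) - 1 + 1 = n := by ring
      rw [this]
  rw [hnum]
  field_simp

lemma sum_Icc_reflect {M : Type*} [AddCommMonoid M] (n : ℕ) (f : ℕ → M) :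
    ∑ a ∈ Finset.Icc 1 (n - 1), f a = ∑ a ∈ Finset.Icc 1 (n - 1), f (n - a) := by
  apply Finset.sum_nbij' (i := fun a => n - a) (j := fun a => n - a)
  · intro a ha; rw [Finset.mem_Icc] at *; omega
  · intro a ha; rw [Finset.mem_Icc] at *; omega
  · intro a ha; rw [Finset.mem_Icc] at ha; omega
  · intro a ha; rw [Finset.mem_Icc] at ha; omega
  · intro a ha
    rw [Finset.mem_Icc] at ha
    congr 1
    omega

lemma dsum (n : ℕ) (hn : 2 ≤ n) :
    ∑ a ∈ Finset.Icc 1 (n - 1), 2 * a * dd n a = n * tau n := by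
  have e1 : ∑ a ∈ Finset.Icc 1 (n - 1), 2 * a * dd n a
      = ∑ a ∈ Finset.Icc 1 (n - 1), 2 * (n - a) * dd n a := by
    rw [sum_Icc_reflect n (fun a => 2 * a * dd n a)]
    apply Finset.sum_congr rfl
    intro a ha
    rw [Finset.mem_Icc] at ha
    have : dd n (n - a) = dd n a := by unfold dd; omega
    rw [this]
  have e2 : (∑ a ∈ Finset.Icc 1 (n - 1), 2 * a * dd n a)
      + (∑ a ∈ Finset.Icc 1 (n - 1), 2 * (n - a) * dd n a)
      = 2 * n * tau n := by
    rw [← Finset.sum_add_distrib]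
    unfold tau
    rw [Finset.mul_sum]
    apply Finset.sum_congr rfl
    intro a ha
    rw [Finset.mem_Icc] at ha
    have h : 2 * a + 2 * (n - a) = 2 * n := by omega
    calc 2 * a * dd n a + 2 * (n - a) * dd n a = (2 * a + 2 * (n - a)) * dd n a := by ring
      _ = 2 * n * dd n a := by rw [h]
  have e3 : 2 * (∑ a ∈ Finset.Icc 1 (n - 1), 2 * a * dd n a) = 2 * (n * tau n) := by
    rw [two_mul]
    nth_rewrite 2 [e1]
    rw [e2]
    ring
  exact Nat.eq_of_mul_eq_mul_left (by omega) e3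

lemma master2 (n : ℕ) (hn : 2 ≤ n) :
    ∑ a ∈ Finset.Icc 1 (n - 1),
        (((n - 1).choose (a - 1) : ℕ) : ℚ)
          * (KK a (n - a) * (Ey a + Ey (n - a) + (dd n a : ℚ)))
      = Ey n := by
  have hz4 : (n : ℚ) ≠ 0 := Nat.cast_ne_zero.2 (by omega)
  have hz5 : (n : ℚ) - 1 ≠ 0 := sub_ne_zero.2 (by exact_mod_cast (by omega : n ≠ 1))
  have step1 : ∑ a ∈ Finset.Icc 1 (n - 1),
        (((n - 1).choose (a - 1) : ℕ) : ℚ)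
          * (KK a (n - a) * (Ey a + Ey (n - a) + (dd n a : ℚ)))
      = ∑ a ∈ Finset.Icc 1 (n - 1),
          (2 * (a : ℚ) * (Ey a + Ey (n - a) + (dd n a : ℚ))) / ((n : ℚ) * ((n : ℚ) - 1)) := by
    apply Finset.sum_congr rfl
    intro a ha
    rw [Finset.mem_Icc] at ha
    rw [← mul_assoc, coeff_eq n a ha.1 ha.2 hn]
    rw [div_mul_eq_mul_div]
  rw [step1, ← Finset.sum_div]
  have key : ∑ a ∈ Finset.Icc 1 (n - 1), 2 * (a : ℚ) * (Ey a + Ey (n - a) + (dd n a : ℚ))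
      = (n : ℚ) * ((n : ℚ) - 1) * Ey n := by
    have expand : ∑ a ∈ Finset.Icc 1 (n - 1), 2 * (a : ℚ) * (Ey a + Ey (n - a) + (dd n a : ℚ))
        = (∑ a ∈ Finset.Icc 1 (n - 1), 2 * (a : ℚ) * Ey a)
          + (∑ a ∈ Finset.Icc 1 (n - 1), 2 * (a : ℚ) * Ey (n - a))
          + (∑ a ∈ Finset.Icc 1 (n - 1), 2 * (a : ℚ) * (dd n a : ℚ)) := by
      rw [← Finset.sum_add_distrib, ← Finset.sum_add_distrib]
      apply Finset.sum_congr rfl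
      intro a _
      ring
    have hrefl : ∑ a ∈ Finset.Icc 1 (n - 1), 2 * (a : ℚ) * Ey (n - a)
        = ∑ a ∈ Finset.Icc 1 (n - 1), (2 * (n : ℚ) - 2 * (a : ℚ)) * Ey a := by
      rw [sum_Icc_reflect n (fun a => 2 * (a : ℚ) * Ey (n - a))]
      apply Finset.sum_congr rfl
      intro a ha
      rw [Finset.mem_Icc] at ha
      have h1 : n - (n - a) = a := by omega
      have h2 : ((n - a : ℕ) : ℚ) = (n : ℚ) - (a : ℚ) := by
        rw [Nat.cast_sub (by omega : a ≤ n)]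
      rw [h1, h2]
      ring
    have hdd : ∑ a ∈ Finset.Icc 1 (n - 1), 2 * (a : ℚ) * (dd n a : ℚ)
        = (n : ℚ) * (tau n : ℚ) := by
      have h := dsum n hn
      have h2 : ((∑ a ∈ Finset.Icc 1 (n - 1), 2 * a * dd n a : ℕ) : ℚ)
          = ((n * tau n : ℕ) : ℚ) := by exact_mod_cast h
      push_cast at h2
      convert h2 using 1
    have hEE : (∑ a ∈ Finset.Icc 1 (n - 1), 2 * (a : ℚ) * Ey a)
        + (∑ a ∈ Finset.Icc 1 (n - 1), (2 * (n : ℚ) - 2 * (a : ℚ)) * Ey a)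
        = 2 * (n : ℚ) * ∑ a ∈ Finset.Icc 1 (n - 1), Ey a := by
      rw [← Finset.sum_add_distrib, Finset.mul_sum]
      apply Finset.sum_congr rfl
      intro a _
      ring
    have hm := master n hn
    rw [expand, hrefl, hdd]
    linear_combination hEE - (n : ℚ) * hm
  rw [key]
  field_simp

lemma yule_leaf (x : ℕ) : yule (leaf x) = 1 := by
  simp [yule, yuleProd, numLeaves, Nat.factorial]

lemma double_factor (s t : Finset PTree) (C : ℚ) (X Y : PTree → ℚ) :
    ∑ l ∈ s, ∑ r ∈ t, C * (X l * Y r) = C * ((∑ l ∈ s, X l) * (∑ r ∈ t, Y r)) := by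
  simp only [← Finset.mul_sum]
  congr 1
  rw [Finset.sum_mul]

lemma yule_sum : ∀ (S : Finset ℕ), S.Nonempty → ∑ t ∈ treesOn S, yule t = 1 := by
  suffices H : ∀ n (S : Finset ℕ), S.card = n → S.Nonempty → ∑ t ∈ treesOn S, yule t = 1 by
    intro S hS; exact H S.card S rfl hS
  intro n
  induction n using Nat.strong_induction_on with
  | _ n ih =>
    intro S hc hS
    subst hc
    by_cases h1 : S.card ≤ 1
    · have hc1 : S.card = 1 := by have := Finset.card_pos.2 hS; omega
      obtain ⟨x, rfl⟩ := Finset.card_eq_one.1 hc1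
      rw [treesOn_small (by omega), Finset.image_singleton, Finset.sum_singleton, yule_leaf]
    · push_neg at h1
      have hFG : ∀ A ∈ splits S,
          (∑ l ∈ treesOn A, ∑ r ∈ treesOn (S \ A), yule (node l r))
            = KK A.card (S.card - A.card) := by
        intro A hA
        obtain ⟨hsub, hAne, hcne, _⟩ := splits_mem hA
        have hlt := splits_card_lt hA
        have hy1 : ∑ l ∈ treesOn A, yule l = 1 := ih A.card hlt.1 A rfl hAne
        have hy2 : ∑ r ∈ treesOn (S \ A), yule r = 1 := ih (S \ A).card hlt.2 _ rfl hcne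
        have hcard : (S \ A).card = S.card - A.card := Finset.card_sdiff_of_subset hsub
        calc ∑ l ∈ treesOn A, ∑ r ∈ treesOn (S \ A), yule (node l r)
            = ∑ l ∈ treesOn A, ∑ r ∈ treesOn (S \ A),
                KK A.card ((S \ A).card) * (yule l * yule r) := by
              refine Finset.sum_congr rfl fun l hl => Finset.sum_congr rfl fun r hr => ?_
              rw [yule_node, numLeaves_of_mem hl, numLeaves_of_mem hr]
              ring
          _ = KK A.card ((S \ A).card)
                * ((∑ l ∈ treesOn A, yule l) * (∑ r ∈ treesOn (S \ A), yule r)) :=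
              double_factor _ _ _ _ _
          _ = KK A.card (S.card - A.card) := by rw [hy1, hy2, hcard]; ring
      rw [sum_treesOn h1, sum_splits_card h1 _ (fun a => KK a (S.card - a)) hFG]
      exact sum_coeff_one S.card h1

lemma colless_sum : ∀ (S : Finset ℕ), S.Nonempty →
    ∑ t ∈ treesOn S, (colless t : ℚ) * yule t = Ey S.card := by
  suffices H : ∀ n (S : Finset ℕ), S.card = n → S.Nonempty →
      ∑ t ∈ treesOn S, (colless t : ℚ) * yule t = Ey S.card by
    intro S hS; exact H S.card S rfl hS
  intro n
  induction n using Nat.strong_induction_on with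
  | _ n ih =>
    intro S hc hS
    subst hc
    by_cases h1 : S.card ≤ 1
    · have hc1 : S.card = 1 := by have := Finset.card_pos.2 hS; omega
      obtain ⟨x, rfl⟩ := Finset.card_eq_one.1 hc1
      rw [treesOn_small (by omega), Finset.image_singleton, Finset.sum_singleton]
      have h2 : colless (leaf x) = 0 := rfl
      rw [hc1, h2, Ey, if_pos (by omega)]
      norm_num
    · push_neg at h1
      have hFG : ∀ A ∈ splits S,
          (∑ l ∈ treesOn A, ∑ r ∈ treesOn (S \ A), (colless (node l r) : ℚ) * yule (node l r))
            = KK A.card (S.card - A.card)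
                * (Ey A.card + Ey (S.card - A.card) + (dd S.card A.card : ℚ)) := by
        intro A hA
        obtain ⟨hsub, hAne, hcne, _⟩ := splits_mem hA
        have hlt := splits_card_lt hA
        have hcard : (S \ A).card = S.card - A.card := Finset.card_sdiff_of_subset hsub
        have hy1 : ∑ l ∈ treesOn A, yule l = 1 := yule_sum A hAne
        have hy2 : ∑ r ∈ treesOn (S \ A), yule r = 1 := yule_sum _ hcne
        have hc1 : ∑ l ∈ treesOn A, (colless l : ℚ) * yule l = Ey A.card :=
          ih A.card hlt.1 A rfl hAne
        have hc2 : ∑ r ∈ treesOn (S \ A), (colless r : ℚ) * yule r = Ey (S.card - A.card) := by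
          rw [← hcard]
          exact ih (S \ A).card hlt.2 _ rfl hcne
        have key : ∀ l ∈ treesOn A, ∀ r ∈ treesOn (S \ A),
            (colless (node l r) : ℚ) * yule (node l r)
              = KK A.card ((S \ A).card) * (((colless l : ℚ) * yule l) * yule r)
                + KK A.card ((S \ A).card) * (yule l * ((colless r : ℚ) * yule r))
                + (KK A.card ((S \ A).card) * (dd S.card A.card : ℚ)) * (yule l * yule r) := by
          intro l hl r hr
          have hcol : colless (node l r)
              = colless l + colless r + ((l.numLeaves : ℤ) - (r.numLeaves : ℤ)).natAbs := rfl
          have hd : ((l.numLeaves : ℤ) - (r.numLeaves : ℤ)).natAbs = dd S.card A.card := by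
            rw [numLeaves_of_mem hl, numLeaves_of_mem hr, hcard]
            unfold dd
            have h3 : A.card ≤ S.card := Finset.card_le_card hsub
            omega
          rw [yule_node, numLeaves_of_mem hl, numLeaves_of_mem hr, hcol, hd]
          push_cast
          ring
        calc ∑ l ∈ treesOn A, ∑ r ∈ treesOn (S \ A),
              (colless (node l r) : ℚ) * yule (node l r)
            = ∑ l ∈ treesOn A, ∑ r ∈ treesOn (S \ A),
                (KK A.card ((S \ A).card) * (((colless l : ℚ) * yule l) * yule r)
                + KK A.card ((S \ A).card) * (yule l * ((colless r : ℚ) * yule r))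
                + (KK A.card ((S \ A).card) * (dd S.card A.card : ℚ)) * (yule l * yule r)) := by
              refine Finset.sum_congr rfl fun l hl => Finset.sum_congr rfl fun r hr => ?_
              exact key l hl r hr
          _ = KK A.card ((S \ A).card)
                * ((∑ l ∈ treesOn A, (colless l : ℚ) * yule l) * (∑ r ∈ treesOn (S \ A), yule r))
              + KK A.card ((S \ A).card)
                * ((∑ l ∈ treesOn A, yule l)
                    * (∑ r ∈ treesOn (S \ A), (colless r : ℚ) * yule r))
              + (KK A.card ((S \ A).card) * (dd S.card A.card : ℚ))
                * ((∑ l ∈ treesOn A, yule l) * (∑ r ∈ treesOn (S \ A), yule r)) := by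
              simp only [Finset.sum_add_distrib]
              rw [double_factor, double_factor, double_factor]
          _ = KK A.card (S.card - A.card)
                * (Ey A.card + Ey (S.card - A.card) + (dd S.card A.card : ℚ)) := by
              rw [hy1, hy2, hc1, hc2, hcard]
              ring
      rw [sum_treesOn h1, sum_splits_card h1 _
        (fun a => KK a (S.card - a) * (Ey a + Ey (S.card - a) + (dd S.card a : ℚ))) hFG]
      exact master2 S.card h1

end PTree

open PTree in
/-- The expected value of the Colless index under the Yule model is
n·∑_{j=2}^{⌊n/2⌋} 1/j + δ_odd(n). -/
theorem expected_colless_yule (n : ℕ) (hn : 2 ≤ n) :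
    (∑ᶠ t : {t : PTree // isTreeOn (Finset.Icc 1 n) t}, (colless t.1 : ℚ) * yule t.1) =
      (n : ℚ) * ∑ j ∈ Finset.Icc 2 (n / 2), (1 : ℚ) / j +
        (if Odd n then 1 else 0) := by
  have hne : (Finset.Icc 1 n).Nonempty := ⟨1, by simp [Finset.mem_Icc]; omega⟩
  have hcard : (Finset.Icc 1 n).card = n := by rw [Nat.card_Icc]; omega
  have key := colless_sum (Finset.Icc 1 n) hne
  rw [hcard] at key
  letI : Fintype {t : PTree // isTreeOn (Finset.Icc 1 n) t} :=
    Fintype.subtype (treesOn (Finset.Icc 1 n)) (fun t => mem_treesOn _ t)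
  have h1 : (∑ᶠ t : {t : PTree // isTreeOn (Finset.Icc 1 n) t}, (colless t.1 : ℚ) * yule t.1)
      = ∑ t ∈ treesOn (Finset.Icc 1 n), (colless t : ℚ) * yule t := by
    rw [finsum_eq_sum_of_fintype,
      ← Finset.sum_subtype (treesOn (Finset.Icc 1 n)) (fun t => mem_treesOn _ t)
        (fun t => (colless t : ℚ) * yule t)]
  rw [h1, key, Ey, if_neg (by omega)]
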